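/- arXiv:1402.6251 — 2 statements merged into one kernel-verified Lean document; each statement's English description precedes it below -/
import Mathlib

section
/- Let q ∈ (0,1), k,l coprime positive integers, and let A, B be elements of a *-algebra satisfying BA = qAB, B*A = qAB*, BB* = B*B, AA* + BB* = 1, A*A + q²B*B = 1. Set a = BB* and b = Bᵏ Aˡ. Then a* = a, a b* = q^{-2l} b* a, b*b = q^{2kl} aᵏ ∏_{m=0}^{l-1}(1 - q^{2(m+1)} a), and b b* = aᵏ ∏_{m=1}^{l}(1 - q^{-2(m-1)} a). -/
lemma wpr_pow_right {R : Type*} [Ring R] [Algebra ℝ R] (c : ℝ) (x y : R)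
    (h : x * y = c • (y * x)) (n : ℕ) : x * y ^ n = (c ^ n) • (y ^ n * x) := by
  induction n with
  | zero => simp
  | succ n ih =>
    rw [pow_succ, ← mul_assoc, ih, smul_mul_assoc, mul_assoc, h, mul_smul_comm,
        smul_smul, ← pow_succ, pow_succ, mul_assoc]

lemma wpr_pow_left {R : Type*} [Ring R] [Algebra ℝ R] (c : ℝ) (x y : R)
    (h : x * y = c • (y * x)) (n : ℕ) : x ^ n * y = (c ^ n) • (y * x ^ n) := by
  induction n with
  | zero => simp
  | succ n ih =>
    rw [pow_succ', mul_assoc, ih, mul_smul_comm, ← mul_assoc, h, smul_mul_assoc,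
        smul_smul, mul_assoc, ← pow_succ', ← pow_succ]

lemma wpr_pow_pow {R : Type*} [Ring R] [Algebra ℝ R] (c : ℝ) (x y : R)
    (h : x * y = c • (y * x)) (m n : ℕ) :
    x ^ m * y ^ n = (c ^ (m * n)) • (y ^ n * x ^ m) := by
  rw [wpr_pow_right (c ^ m) (x ^ m) y (wpr_pow_left c x y h m) n, ← pow_mul]

/-- In a `*`-algebra with elements `A, B` satisfying the `C[SU_{2,q}]`
relations, the elements `a = BB*` and `b = BᵏAˡ` satisfy the quantum weighted
projective space relations of Brzeziński–Fairfax. -/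
theorem weighted_projective_relations (q : ℝ) (hq : q ∈ Set.Ioo (0 : ℝ) 1)
    (k l : ℕ) (hk : 0 < k) (hl : 0 < l) (hco : Nat.Coprime k l)
    {R : Type*} [Ring R] [Algebra ℝ R] [StarRing R]
    (A B : R)
    (h1 : B * A = q • (A * B))
    (h2 : star B * A = q • (A * star B))
    (h3 : B * star B = star B * B)
    (h4 : A * star A + B * star B = 1)
    (h5 : star A * A + (q ^ 2) • (star B * B) = 1)
    (a b : R) (ha : a = B * star B) (hb : b = B ^ k * A ^ l) :
    star a = a ∧
    a * star b = (q ^ (-(2 * (l : ℤ)))) • (star b * a) ∧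
    star b * b = (q ^ (2 * k * l)) •
      (a ^ k * ((List.range l).map (fun m => (1 : R) - (q ^ (2 * (m + 1))) • a)).prod) ∧
    b * star b =
      a ^ k * ((List.range l).map (fun m => (1 : R) - (q ^ (-(2 * (m : ℤ)))) • a)).prod := by
  have hq0 : (0:ℝ) < q := hq.1
  have hqne : q ≠ 0 := ne_of_gt hq0
  have ha' : a = star B * B := by rw [ha, h3]
  have hastar : star a = a := by rw [ha, star_mul, star_star]
  -- basic commutation relations of a
  have haA : a * A = (q ^ 2) • (A * a) := by
    rw [ha, mul_assoc, h2, mul_smul_comm, ← mul_assoc, h1, smul_mul_assoc, smul_smul,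
        mul_assoc, ← sq]
  -- the central element s2 = star (algebraMap (q^2)) acts on a as q^2
  set s2 : R := star ((algebraMap ℝ R) (q ^ 2)) with hs2
  have hs2c : ∀ x : R, x * s2 = s2 * x := by
    intro x
    have := congrArg star (Algebra.commutes (q ^ 2) (star x))
    simpa only [star_mul, star_star] using this
  have hsmulstar : ∀ x : R, star ((q ^ 2) • x) = star x * s2 := by
    intro x
    rw [Algebra.smul_def, star_mul, hs2]
  have hstar5 : star A * A + (star B * B) * s2 = 1 := by
    have := congrArg star h5
    simpa [star_add, star_one, star_mul, star_star, hsmulstar] using this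
  have hs2a : a * s2 = (q ^ 2) • a := by
    have e1 : (q ^ 2) • (star B * B) = 1 - star A * A := by
      rw [eq_sub_iff_add_eq, add_comm]; exact h5
    have e2 : (star B * B) * s2 = 1 - star A * A := by
      rw [eq_sub_iff_add_eq, add_comm]; exact hstar5
    rw [ha', e2, ← e1]
  have hAsa : star A * a = (q ^ 2) • (a * star A) := by
    have := congrArg star haA
    rw [star_mul, hastar, hsmulstar, star_mul, hastar] at this
    rw [this, mul_assoc, hs2c (star A), ← mul_assoc, hs2a, smul_mul_assoc]
  have haB : a * B = B * a := by
    rw [ha, mul_assoc, ← h3, ← mul_assoc]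
  have haBs : a * star B = star B * a := by
    rw [ha', mul_assoc, h3, ← mul_assoc]
  have cBBs : Commute B (star B) := h3
  have caBs : Commute a (star B) := haBs
  -- star A * A and A * star A
  have hAsA : star A * A = 1 - (q ^ 2) • a := by
    rw [eq_sub_iff_add_eq, ha', h5]
  have hAAs : A * star A = 1 - a := by
    rw [eq_sub_iff_add_eq, ha, h4]
  -- star b
  have hsb : star b = star A ^ l * star B ^ k := by
    rw [hb, star_mul, star_pow, star_pow]
  have hAspow : ∀ n : ℕ, star A ^ n * a = (q ^ (2 * n)) • (a * star A ^ n) := by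
    intro n
    have := wpr_pow_left (q ^ 2) (star A) a hAsa n
    rwa [← pow_mul] at this
  have haApow : ∀ n : ℕ, a * A ^ n = (q ^ (2 * n)) • (A ^ n * a) := by
    intro n
    have := wpr_pow_right (q ^ 2) a A haA n
    rwa [← pow_mul] at this
  have haAspowinv : ∀ n : ℕ, a * star A ^ n = (q ^ (2 * n))⁻¹ • (star A ^ n * a) := by
    intro n
    rw [hAspow n, smul_smul, inv_mul_cancel₀ (by positivity), one_smul]
  -- products of the projector-type factors
  have hP : ∀ n : ℕ, star A ^ n * A ^ n =
      ((List.range n).map (fun m => (1 : R) - (q ^ (2 * (m + 1))) • a)).prod := by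
    intro n
    induction n with
    | zero => simp
    | succ n ih =>
      rw [List.range_succ, List.map_append, List.prod_append, List.map_singleton,
          List.prod_singleton, ← ih]
      rw [pow_succ (star A), pow_succ' A, mul_assoc, ← mul_assoc (star A), hAsA]
      rw [sub_mul, one_mul, smul_mul_assoc, mul_sub, mul_sub, mul_one]
      congr 1
      simp only [haApow n, mul_smul_comm, smul_smul, ← mul_assoc]
      congr 1
      ring
  have hQ : ∀ n : ℕ, A ^ n * star A ^ n =
      ((List.range n).map (fun m : ℕ => (1 : R) - (q ^ (2 * m))⁻¹ • a)).prod := by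
    intro n
    induction n with
    | zero => simp
    | succ n ih =>
      rw [List.range_succ, List.map_append, List.prod_append, List.map_singleton,
          List.prod_singleton, ← ih]
      rw [pow_succ A, pow_succ' (star A), mul_assoc, ← mul_assoc A, hAAs]
      rw [sub_mul, one_mul, mul_sub, mul_sub, mul_one]
      congr 1
      simp only [haAspowinv n, mul_smul_comm, ← mul_assoc]
  have hlist : ((List.range l).map (fun m => (1 : R) - (q ^ (-(2 * (m : ℤ)))) • a)) =
      (List.range l).map (fun m : ℕ => (1 : R) - (q ^ (2 * m))⁻¹ • a) := by
    simp only [List.pure_def, List.bind_eq_flatMap, ← List.map_eq_flatMap, List.map_map]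
    refine List.map_congr_left fun m hm => ?_
    simp [Function.comp, zpow_neg, ← zpow_natCast q (2 * m)]
  -- B-power facts
  have hBsB : star B ^ k * B ^ k = a ^ k := by
    rw [ha', ← cBBs.symm.mul_pow]
  have hBBs : B ^ k * star B ^ k = a ^ k := by
    rw [ha, ← cBBs.mul_pow]
  refine ⟨by rw [ha, star_mul, star_star], ?_, ?_, ?_⟩
  · -- a * star b = q^{-2l} • (star b * a)
    have hzpow : (q : ℝ) ^ (-(2 * (l : ℤ))) = (q ^ (2 * l))⁻¹ := by
      rw [← zpow_natCast q (2 * l), ← zpow_neg]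
      norm_cast
    rw [hsb, ← mul_assoc, haAspowinv l, smul_mul_assoc, mul_assoc, (caBs.pow_right k).eq,
        ← mul_assoc, hzpow]
  · -- star b * b
    rw [hsb, hb, mul_assoc, ← mul_assoc (star B ^ k), hBsB]
    have hak : a ^ k * A ^ l = (q ^ (2 * k * l)) • (A ^ l * a ^ k) := by
      have := wpr_pow_pow (q ^ 2) a A haA k l
      rwa [← pow_mul, ← mul_assoc] at this
    rw [hak, mul_smul_comm, ← mul_assoc, hP l]
    congr 1
    have hc : Commute (a ^ k)
        (((List.range l).map (fun m => (1 : R) - (q ^ (2 * (m + 1))) • a)).prod) := by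
      refine (Commute.list_prod_right _ _ fun y hy => ?_).pow_left k
      simp only [List.mem_map, List.mem_range] at hy
      obtain ⟨m, -, rfl⟩ := hy
      exact (Commute.one_right a).sub_right ((Commute.refl a).smul_right _)
    exact hc.symm.eq
  · -- b * star b
    rw [hsb, hb, hlist, mul_assoc, ← mul_assoc (A ^ l), hQ l]
    have hc : Commute (star B ^ k)
        (((List.range l).map (fun m : ℕ => (1 : R) - (q ^ (2 * m))⁻¹ • a)).prod) := by
      refine (Commute.list_prod_right _ _ fun y hy => ?_).pow_left k
      simp only [List.mem_map, List.mem_range] at hy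
      obtain ⟨m, -, rfl⟩ := hy
      exact (Commute.one_right _).sub_right (caBs.symm.smul_right _)
    rw [← hc.eq, ← mul_assoc, hBBs]
end

section
/- Let q ∈ (0,1), l ∈ ℕ, s ∈ {1,...,l}, and define operators on ℓ²(ℕ₀) by a e_p = q^{2(lp+s-1)} e_p and b* e_p = q^{lp+s-1} ∏_{r=1}^{l} √(1 - q^{2(lp+s-r)}) e_{p-1} (with b* e_0 = 0). Then these operators satisfy the quantum teardrop relations with k = 1: a* = a, a b* = q^{-2l} b* a, b*b = q^{2l} a ∏_{m=0}^{l-1}(1 - q^{2(m+1)} a), b b* = a ∏_{m=1}^{l}(1 - q^{-2(m-1)} a). -/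
open ContinuousLinearMap

local notation "⟪" x ", " y "⟫" => @inner ℂ _ _ x y

private lemma vec_ext' {H : Type*} [NormedAddCommGroup H] [InnerProductSpace ℂ H]
    [CompleteSpace H] (e : HilbertBasis ℕ ℂ H) {x y : H}
    (h : ∀ i, ⟪e i, x⟫ = ⟪e i, y⟫) : x = y := by
  apply e.repr.injective
  apply lp.ext
  funext i
  rw [e.repr_apply_apply, e.repr_apply_apply, h i]

private lemma op_ext' {H : Type*} [NormedAddCommGroup H] [InnerProductSpace ℂ H]
    [CompleteSpace H] (e : HilbertBasis ℕ ℂ H) {T S : H →L[ℂ] H}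
    (h : ∀ i, T (e i) = S (e i)) : T = S := by
  refine ContinuousLinearMap.ext_on (s := Set.range e)
    (Submodule.dense_iff_topologicalClosure_eq_top.mpr e.dense_span) ?_
  rintro x ⟨i, rfl⟩
  exact h i

private lemma listprod_apply' {H : Type*} [NormedAddCommGroup H] [InnerProductSpace ℂ H]
    (a : H →L[ℂ] H) (c : ℕ → ℂ) (x : H) (α : ℂ) (hx : a x = α • x) (n : ℕ) :
    (((List.range n).map (fun m => (1 : H →L[ℂ] H) - c m • a)).prod) x
      = (∏ m ∈ Finset.range n, (1 - c m * α)) • x := by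
  induction n with
  | zero => simp
  | succ n ih =>
    rw [List.range_succ, List.map_append, List.prod_append]
    simp only [List.map_cons, List.map_nil, List.prod_cons, List.prod_nil, mul_one]
    have h1 : ((1 : H →L[ℂ] H) - c n • a) x = (1 - c n * α) • x := by
      simp [hx, sub_smul, smul_smul]
    rw [ContinuousLinearMap.mul_apply, h1, map_smul, ih, smul_smul,
      Finset.prod_range_succ, mul_comm]

/-- The operators `a e_p = q^{2(lp+s-1)} e_p` and
`b* e_p = q^{lp+s-1} ∏_{r=1}^{l} √(1-q^{2(lp+s-r)}) e_{p-1}` (with `b* e_0 = 0`)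
on `ℓ²(ℕ₀)` satisfy the quantum teardrop relations (`k = 1`). Here `b` is the
adjoint of the given operator `b*`. -/
theorem teardrop_representation_relations (q : ℝ) (hq : q ∈ Set.Ioo (0 : ℝ) 1)
    (l : ℕ) (hl : 0 < l) (s : ℕ) (hs1 : 1 ≤ s) (hsl : s ≤ l)
    {H : Type*} [NormedAddCommGroup H] [InnerProductSpace ℂ H] [CompleteSpace H]
    (e : HilbertBasis ℕ ℂ H) (a bStar : H →L[ℂ] H)
    (ha : ∀ p : ℕ, a (e p) = ((q ^ ((2 : ℤ) * (l * p + s - 1)) : ℝ) : ℂ) • e p)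
    (hb0 : bStar (e 0) = 0)
    (hbS : ∀ p : ℕ, bStar (e (p + 1)) =
      ((q ^ ((l : ℤ) * (p + 1) + s - 1) *
        ∏ r ∈ Finset.range l,
          Real.sqrt (1 - q ^ ((2 : ℤ) * ((l : ℤ) * (p + 1) + s - (r + 1)))) : ℝ) : ℂ) • e p) :
    adjoint a = a ∧
    a * bStar = ((q : ℂ) ^ (-(2 * (l : ℤ)))) • (bStar * a) ∧
    bStar * adjoint bStar = ((q : ℂ) ^ (2 * l)) •
      (a * ((List.range l).map
        (fun m => (1 : H →L[ℂ] H) - ((q : ℂ) ^ (2 * (m + 1))) • a)).prod) ∧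
    adjoint bStar * bStar =
      a * ((List.range l).map
        (fun m => (1 : H →L[ℂ] H) - ((q : ℂ) ^ (-(2 * (m : ℤ)))) • a)).prod := by
  obtain ⟨hq0, hq1⟩ := hq
  have hqne : q ≠ 0 := hq0.ne'
  have ip : ∀ i j : ℕ, ⟪e i, e j⟫ = if i = j then 1 else 0 :=
    orthonormal_iff_ite.mp e.orthonormal
  set α : ℕ → ℝ := fun p => q ^ ((2 : ℤ) * (l * p + s - 1)) with hα
  set c : ℕ → ℝ := fun p => q ^ ((l : ℤ) * (p + 1) + s - 1) *
      ∏ r ∈ Finset.range l,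
        Real.sqrt (1 - q ^ ((2 : ℤ) * ((l : ℤ) * (p + 1) + s - (r + 1)))) with hc
  have ha' : ∀ p : ℕ, a (e p) = ((α p : ℝ) : ℂ) • e p := ha
  have hbS' : ∀ p : ℕ, bStar (e (p + 1)) = ((c p : ℝ) : ℂ) • e p := hbS
  have hterm : ∀ (p r : ℕ), r < l →
      (0 : ℝ) ≤ 1 - q ^ ((2 : ℤ) * ((l : ℤ) * (p + 1) + s - (r + 1))) := by
    intro p r hr
    have h1 : (r : ℤ) + 1 ≤ l := by exact_mod_cast hr
    have h2 : (1 : ℤ) ≤ s := by exact_mod_cast hs1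
    have hpos : (0 : ℤ) < 2 * ((l : ℤ) * (p + 1) + s - (r + 1)) := by
      nlinarith [Int.ofNat_nonneg p]
    have := zpow_lt_one₀ hq0 hq1 hpos
    linarith
  have hcsq : ∀ p : ℕ, (c p) ^ 2 = q ^ ((2 : ℤ) * ((l : ℤ) * (p + 1) + s - 1)) *
      ∏ r ∈ Finset.range l, (1 - q ^ ((2 : ℤ) * ((l : ℤ) * (p + 1) + s - (r + 1)))) := by
    intro p
    rw [hc]
    simp only
    rw [mul_pow, ← Finset.prod_pow]
    congr 1
    · rw [← zpow_natCast (q ^ ((l : ℤ) * (p + 1) + s - 1)) 2, ← zpow_mul]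
      congr 1
      ring
    · refine Finset.prod_congr rfl fun r hr => ?_
      rw [Real.sq_sqrt (hterm p r (Finset.mem_range.mp hr))]
  have hB : ∀ p : ℕ, (adjoint bStar) (e p) = ((c p : ℝ) : ℂ) • e (p + 1) := by
    intro p
    apply vec_ext' e
    intro j
    rw [adjoint_inner_right]
    rcases j with _ | j
    · rw [hb0, inner_zero_left, inner_smul_right, ip]
      simp
    · rw [hbS' j, inner_smul_left, inner_smul_right, ip, ip, Complex.conj_ofReal]
      by_cases h : j = p
      · subst h; simp
      · have h2 : ¬ (j + 1 = p + 1) := fun hh => h (Nat.succ_injective hh)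
        simp [h, h2]
  refine ⟨?_, ?_, ?_, ?_⟩
  · -- adjoint a = a
    apply op_ext' e
    intro p
    apply vec_ext' e
    intro j
    rw [adjoint_inner_right, ha' j, ha' p, inner_smul_left, inner_smul_right,
      ip, Complex.conj_ofReal]
    by_cases h : j = p
    · subst h; rfl
    · simp [h]
  · -- a bStar = q^{-2l} bStar a
    apply op_ext' e
    intro p
    rw [ContinuousLinearMap.mul_apply, ContinuousLinearMap.smul_apply,
      ContinuousLinearMap.mul_apply]
    rcases p with _ | p
    · rw [hb0, ha' 0, map_smul, hb0, map_zero, smul_zero, smul_zero]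
    · rw [hbS' p, ha' (p + 1), map_smul, map_smul, hbS' p, ha' p, smul_smul, smul_smul,
        smul_smul]
      congr 1
      have key : α p = q ^ (-(2 * (l : ℤ))) * α (p + 1) := by
        rw [hα]
        simp only
        rw [← zpow_add₀ hqne]
        congr 1
        push_cast
        ring
      calc ((c p : ℝ) : ℂ) * ((α p : ℝ) : ℂ)
          = ((c p * (q ^ (-(2 * (l : ℤ))) * α (p + 1)) : ℝ) : ℂ) := by
            rw [← key]; push_cast; ring
        _ = (q : ℂ) ^ (-(2 * (l : ℤ))) * (((α (p + 1) : ℝ) : ℂ) * ((c p : ℝ) : ℂ)) := by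
            push_cast [Complex.ofReal_zpow]; ring
        _ = (q : ℂ) ^ (-(2 * (l : ℤ))) * ((α (p + 1) : ℝ) : ℂ) * ((c p : ℝ) : ℂ) := by ring
  · -- b* b relation
    apply op_ext' e
    intro p
    rw [ContinuousLinearMap.mul_apply, ContinuousLinearMap.smul_apply,
      ContinuousLinearMap.mul_apply, hB p, map_smul, hbS' p, smul_smul,
      listprod_apply' a _ _ _ (ha' p) l, map_smul, ha' p, smul_smul, smul_smul]
    congr 1
    have R3 : (c p) ^ 2 = q ^ (2 * l) *
        ((∏ m ∈ Finset.range l, (1 - q ^ (2 * (m + 1)) * α p)) * α p) := by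
      have e1 : ∀ m : ℕ, q ^ (2 * (m + 1)) * α p
          = 1 - (1 - q ^ ((2 : ℤ) * ((l : ℤ) * p + s - 1 + (m + 1)))) := by
        intro m
        rw [hα]
        simp only
        rw [sub_sub_cancel, ← zpow_natCast q (2 * (m + 1)), ← zpow_add₀ hqne]
        congr 1
        push_cast
        ring
      have hpr : ∏ m ∈ Finset.range l, (1 - q ^ (2 * (m + 1)) * α p)
          = ∏ m ∈ Finset.range l, (1 - q ^ ((2 : ℤ) * ((l : ℤ) * p + s - 1 + (m + 1)))) := by
        refine Finset.prod_congr rfl fun m _ => ?_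
        rw [e1 m]
        ring
      have hrefl : ∏ r ∈ Finset.range l,
            (1 - q ^ ((2 : ℤ) * ((l : ℤ) * (p + 1) + s - (r + 1))))
          = ∏ m ∈ Finset.range l,
            (1 - q ^ ((2 : ℤ) * ((l : ℤ) * p + s - 1 + (m + 1)))) := by
        rw [← Finset.prod_range_reflect
          (fun m => 1 - q ^ ((2 : ℤ) * ((l : ℤ) * p + s - 1 + (m + 1)))) l]
        refine Finset.prod_congr rfl fun r hr => ?_
        have hr' := Finset.mem_range.mp hr
        congr 2
        have hcast : ((l - 1 - r : ℕ) : ℤ) = (l : ℤ) - 1 - r := by omega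
        rw [hcast]
        ring
      have hpref : q ^ ((2 : ℤ) * ((l : ℤ) * (p + 1) + s - 1)) = q ^ (2 * l) * α p := by
        rw [hα]
        simp only
        rw [← zpow_natCast q (2 * l), ← zpow_add₀ hqne]
        congr 1
        push_cast
        ring
      rw [hcsq p, hrefl, hpr, hpref]
      ring
    calc ((c p : ℝ) : ℂ) * ((c p : ℝ) : ℂ)
        = (((c p) ^ 2 : ℝ) : ℂ) := by push_cast; ring
      _ = ((q ^ (2 * l) * ((∏ m ∈ Finset.range l, (1 - q ^ (2 * (m + 1)) * α p)) * α p)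
            : ℝ) : ℂ) := by rw [R3]
      _ = ((q : ℂ) ^ (2 * l) *
            (∏ m ∈ Finset.range l, (1 - (q : ℂ) ^ (2 * (m + 1)) * ((α p : ℝ) : ℂ))))
              * ((α p : ℝ) : ℂ) := by push_cast; ring
  · -- b b* relation
    apply op_ext' e
    intro p
    rw [ContinuousLinearMap.mul_apply, ContinuousLinearMap.mul_apply]
    simp only [List.pure_def, List.bind_eq_flatMap, ← List.map_eq_flatMap, List.map_map,
      Function.comp_def]
    rcases p with _ | p
    · rw [hb0, map_zero, listprod_apply' a _ _ _ (ha' 0) l, map_smul, ha' 0, smul_smul]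
      have hz : ∏ m ∈ Finset.range l,
          (1 - (q : ℂ) ^ (-(2 * (m : ℤ))) * ((α 0 : ℝ) : ℂ)) = 0 := by
        refine Finset.prod_eq_zero (Finset.mem_range.mpr (show s - 1 < l by omega)) ?_
        rw [show ((α 0 : ℝ) : ℂ) = (q : ℂ) ^ ((2 : ℤ) * ((l : ℤ) * 0 + s - 1)) by
          rw [hα]; simp only; push_cast [Complex.ofReal_zpow]; norm_num]
        rw [← zpow_add₀ (by exact_mod_cast hqne : (q : ℂ) ≠ 0)]
        rw [show -(2 * ((s - 1 : ℕ) : ℤ)) + (2 : ℤ) * ((l : ℤ) * 0 + s - 1) = 0 by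
          have h1 : ((s - 1 : ℕ) : ℤ) = (s : ℤ) - 1 := by omega
          rw [h1]; ring]
        simp
      rw [hz, zero_mul, zero_smul]
    · rw [hbS' p, map_smul, hB p, smul_smul, listprod_apply' a _ _ _ (ha' (p + 1)) l,
        map_smul, ha' (p + 1), smul_smul]
      congr 1
      have R4 : (c p) ^ 2
          = (∏ m ∈ Finset.range l, (1 - q ^ (-(2 * (m : ℤ))) * α (p + 1))) * α (p + 1) := by
        have e4 : ∀ m : ℕ, q ^ (-(2 * (m : ℤ))) * α (p + 1)
            = 1 - (1 - q ^ ((2 : ℤ) * ((l : ℤ) * (p + 1) + s - (m + 1)))) := by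
          intro m
          rw [hα]
          simp only
          rw [sub_sub_cancel, ← zpow_add₀ hqne]
          congr 1
          push_cast
          ring
        have hpr : ∏ m ∈ Finset.range l, (1 - q ^ (-(2 * (m : ℤ))) * α (p + 1))
            = ∏ r ∈ Finset.range l,
              (1 - q ^ ((2 : ℤ) * ((l : ℤ) * (p + 1) + s - (r + 1)))) := by
          refine Finset.prod_congr rfl fun m _ => ?_
          rw [e4 m]
          ring
        have hpref : α (p + 1) = q ^ ((2 : ℤ) * ((l : ℤ) * (p + 1) + s - 1)) := by
          rw [hα]
          simp only
          congr 1 <;> push_cast <;> ring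
        rw [hcsq p, hpr, hpref]
        ring
      calc ((c p : ℝ) : ℂ) * ((c p : ℝ) : ℂ)
          = (((c p) ^ 2 : ℝ) : ℂ) := by push_cast; ring
        _ = (((∏ m ∈ Finset.range l, (1 - q ^ (-(2 * (m : ℤ))) * α (p + 1))) * α (p + 1)
              : ℝ) : ℂ) := by rw [R4]
        _ = (∏ m ∈ Finset.range l,
              (1 - (q : ℂ) ^ (-(2 * (m : ℤ))) * ((α (p + 1) : ℝ) : ℂ)))
              * ((α (p + 1) : ℝ) : ℂ) := by push_cast [Complex.ofReal_zpow]; ring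
end
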